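/- Let m be a positive integer and let a, c, x₀ be integers. Define the sequence x_{i+1} = a·x_i + c for i ≥ 0. Suppose (i) gcd(c, m) = 1, (ii) a ≡ 1 (mod p) for every prime p dividing m, and (iii) a ≡ 1 (mod 4) whenever 4 divides m. Then the sequence (x_i mod m) has full period m: x_m ≡ x₀ (mod m) and the residues x₀, x₁, …, x_{m−1} are pairwise incongruent modulo m. -/

import Mathlib

open Finset

lemma geom_sum_sub_card_dvd (p a : ℤ) (hpa : p ∣ a - 1) (n : ℕ) :
    p ∣ (∑ k ∈ range n, a ^ k) - n := by
  induction n with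
  | zero => simp
  | succ n ih =>
    have h1 : p ∣ a ^ n - 1 := hpa.trans (by simpa using sub_dvd_pow_sub_pow a 1 n)
    have : (∑ k ∈ range (n+1), a ^ k) - (↑(n+1) : ℤ)
        = ((∑ k ∈ range n, a ^ k) - n) + (a ^ n - 1) := by
      rw [Finset.sum_range_succ]; push_cast; ring
    rw [this]
    exact dvd_add ih h1

lemma geom_sum_emultiplicity (p : ℕ) (hp : p.Prime) (a : ℤ) (ha1 : a ≠ 1)
    (hpa : (p : ℤ) ∣ a - 1) (h4 : p = 2 → (4 : ℤ) ∣ a - 1) (n : ℕ) :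
    emultiplicity (p : ℤ) (∑ k ∈ range n, a ^ k) = emultiplicity p n := by
  have hp' : Prime (p : ℤ) := Nat.prime_iff_prime_int.mp hp
  have hna : ¬(p : ℤ) ∣ a := by
    intro h
    have : (p : ℤ) ∣ 1 := by
      have := dvd_sub h hpa
      simpa using this
    exact hp'.not_unit (isUnit_of_dvd_one this)
  have hLTE : emultiplicity (p : ℤ) (a ^ n - 1) =
      emultiplicity (p : ℤ) (a - 1) + emultiplicity p n := by
    rcases hp.eq_two_or_odd' with h2 | hodd
    · subst h2
      have := Int.two_pow_sub_pow' n (h4 rfl) (by exact_mod_cast hna)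
      simp only [one_pow] at this
      rw [show ((2:ℕ):ℤ) = (2:ℤ) by norm_num, this, ← Int.natCast_emultiplicity]
      norm_num
    · have := Int.emultiplicity_pow_sub_pow hp hodd (y := 1) (by simpa using hpa)
        hna n
      simpa using this
  have hmul : emultiplicity (p : ℤ) (a ^ n - 1) =
      emultiplicity (p : ℤ) (∑ k ∈ range n, a ^ k) + emultiplicity (p : ℤ) (a - 1) := by
    rw [← geom_sum_mul a n, emultiplicity_mul hp']
  have hfin : emultiplicity (p : ℤ) (a - 1) ≠ ⊤ := by
    have : FiniteMultiplicity (p : ℤ) (a - 1) :=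
      Int.finiteMultiplicity_iff.mpr ⟨by simpa using hp.ne_one, sub_ne_zero.mpr ha1⟩
    exact finiteMultiplicity_iff_emultiplicity_ne_top.mp this
  have := hmul.symm.trans hLTE
  rw [add_comm] at this
  exact WithTop.add_left_cancel hfin this

lemma pow_dvd_geom_sum_iff (p e : ℕ) (hp : p.Prime) (a : ℤ)
    (hpa : (p : ℤ) ∣ a - 1) (h4 : p = 2 → 2 ≤ e → (4 : ℤ) ∣ a - 1) (n : ℕ) :
    (p : ℤ) ^ e ∣ (∑ k ∈ range n, a ^ k) ↔ p ^ e ∣ n := by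
  rcases Nat.eq_zero_or_pos e with rfl | he
  · simp
  rcases eq_or_ne a 1 with rfl | ha1
  · simp only [one_pow, Finset.sum_const, Finset.card_range, smul_eq_mul, mul_one,
      nsmul_eq_mul]
    rw [show ((p:ℤ))^e = ((p^e : ℕ) : ℤ) by push_cast; ring, Int.natCast_dvd_natCast]
  rcases eq_or_lt_of_le (show 1 ≤ e from he) with he1 | he2
  · subst he1
    have h := geom_sum_sub_card_dvd p a hpa n
    simp only [pow_one]
    constructor
    · intro hS
      have hdn : (p : ℤ) ∣ (n : ℤ) := by
        have := dvd_sub hS h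
        simpa using this
      exact_mod_cast hdn
    · intro hn
      have : (∑ k ∈ range n, a ^ k) = ((∑ k ∈ range n, a ^ k) - n) + n := by ring
      rw [this]
      exact dvd_add h (by exact_mod_cast hn)
  · rw [pow_dvd_iff_le_emultiplicity, geom_sum_emultiplicity p hp a ha1 hpa
      (fun h2 => h4 h2 he2), ← pow_dvd_iff_le_emultiplicity]

lemma m_dvd_geom_sum_iff (m : ℕ) (hm : 0 < m) (a : ℤ)
    (ha : ∀ p : ℕ, Nat.Prime p → (p : ℤ) ∣ (m : ℤ) → (p : ℤ) ∣ a - 1)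
    (ha4 : (4 : ℤ) ∣ (m : ℤ) → (4 : ℤ) ∣ a - 1) (n : ℕ) :
    (m : ℤ) ∣ (∑ k ∈ range n, a ^ k) ↔ m ∣ n := by
  have key : ∀ p ∈ m.primeFactors,
      ((p : ℤ) ^ m.factorization p ∣ (∑ k ∈ range n, a ^ k) ↔ p ^ m.factorization p ∣ n) := by
    intro p hpF
    have hp := Nat.prime_of_mem_primeFactors hpF
    have hpm : p ∣ m := Nat.dvd_of_mem_primeFactors hpF
    have hpa : (p : ℤ) ∣ a - 1 := ha p hp (by exact_mod_cast hpm)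
    refine pow_dvd_geom_sum_iff p _ hp a hpa ?_ n
    intro hp2 he2
    subst hp2
    apply ha4
    have : (2:ℕ)^2 ∣ 2 ^ m.factorization 2 := pow_dvd_pow 2 he2
    have h4m : (2:ℕ)^2 ∣ m := this.trans (Nat.ordProj_dvd m 2)
    exact_mod_cast (by exact_mod_cast h4m : ((2:ℕ)^2 : ℤ) ∣ (m:ℤ))
  constructor
  · intro hS
    rcases Nat.eq_zero_or_pos n with rfl | hn
    · exact dvd_zero m
    rw [← Nat.factorization_le_iff_dvd hm.ne' hn.ne']
    intro p
    by_cases hpF : p ∈ m.primeFactors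
    · have hp := Nat.prime_of_mem_primeFactors hpF
      have hdvd : p ^ m.factorization p ∣ n := (key p hpF).mp
        ((by exact_mod_cast Int.natCast_dvd_natCast.mpr (Nat.ordProj_dvd m p) :
          (p:ℤ) ^ m.factorization p ∣ (m:ℤ)).trans hS)
      exact (Nat.Prime.pow_dvd_iff_le_factorization hp hn.ne').mp hdvd
    · have : m.factorization p = 0 := by
        rw [← Nat.support_factorization] at hpF
        exact Finsupp.notMem_support_iff.mp hpF
      simp [this]
  · intro hmn
    have hprodN : ∏ p ∈ m.primeFactors, p ^ m.factorization p = m := by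
      conv_rhs => rw [← Nat.factorization_prod_pow_eq_self hm.ne']
      rw [Finsupp.prod, Nat.support_factorization]
    have hprod : ∏ p ∈ m.primeFactors, (p:ℤ) ^ m.factorization p = (m : ℤ) := by
      conv_rhs => rw [← hprodN]
      push_cast
      rfl
    rw [← hprod]
    refine Finset.prod_dvd_of_coprime ?_ ?_
    · intro p hp q hq hne
      have hpp := Nat.prime_of_mem_primeFactors hp
      have hqq := Nat.prime_of_mem_primeFactors hq
      exact (IsCoprime.pow (Nat.isCoprime_iff_coprime.mpr
        ((Nat.coprime_primes hpp hqq).mpr hne)))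
    · intro p hpF
      exact (key p hpF).mpr ((Nat.ordProj_dvd m p).trans hmn)

/-- Hull–Dobell theorem: the linear congruential sequence `x_{i+1} = a·x_i + c`
modulo `m` has full period `m` provided `gcd(c, m) = 1`, `a ≡ 1 (mod p)` for every
prime `p ∣ m`, and `a ≡ 1 (mod 4)` whenever `4 ∣ m`: that is, `x_m ≡ x₀ (mod m)`
and `x₀, …, x_{m-1}` are pairwise incongruent modulo `m`. -/
theorem hull_dobell (m : ℕ) (hm : 0 < m) (a c x₀ : ℤ) (x : ℕ → ℤ)
    (hx0 : x 0 = x₀) (hxrec : ∀ i : ℕ, x (i + 1) = a * x i + c)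
    (hc : Int.gcd c (m : ℤ) = 1)
    (ha : ∀ p : ℕ, Nat.Prime p → (p : ℤ) ∣ (m : ℤ) → a ≡ 1 [ZMOD (p : ℤ)])
    (ha4 : (4 : ℤ) ∣ (m : ℤ) → a ≡ 1 [ZMOD (4 : ℤ)]) :
    x m ≡ x 0 [ZMOD (m : ℤ)] ∧
      ∀ i j : ℕ, i < m → j < m → x i ≡ x j [ZMOD (m : ℤ)] → i = j := by
  have ha' : ∀ p : ℕ, Nat.Prime p → (p : ℤ) ∣ (m : ℤ) → (p : ℤ) ∣ a - 1 := by
    intro p hp hd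
    exact dvd_sub_comm.mp (Int.ModEq.dvd (ha p hp hd))
  have ha4' : (4 : ℤ) ∣ (m : ℤ) → (4 : ℤ) ∣ a - 1 := fun h =>
    dvd_sub_comm.mp (Int.ModEq.dvd (ha4 h))
  have key := m_dvd_geom_sum_iff m hm a ha' ha4'
  -- closed form
  have hstep : ∀ i k : ℕ,
      x (i + k) - x i = (∑ j ∈ range k, a ^ j) * ((a - 1) * x i + c) := by
    intro i k
    induction k with
    | zero => simp
    | succ k ih =>
      rw [show i + (k + 1) = (i + k) + 1 from rfl, hxrec (i + k), geom_sum_succ]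
      linear_combination a * ih
  -- coprimality
  have hcop : ∀ i : ℕ, IsCoprime ((a - 1) * x i + c) (m : ℤ) := by
    intro i
    rw [Int.isCoprime_iff_gcd_eq_one]
    by_contra hg
    have hg0 : Int.gcd ((a - 1) * x i + c) (m : ℤ) ≠ 0 := by
      intro h0
      have := (Int.gcd_eq_zero_iff.mp h0).2
      simp at this
      omega
    obtain ⟨p, hp, hpg⟩ := Nat.exists_prime_and_dvd hg
    have hpm : (p : ℤ) ∣ (m : ℤ) :=
      (Int.natCast_dvd_natCast.mpr hpg).trans (Int.gcd_dvd_right _ _)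
    have hpd : (p : ℤ) ∣ (a - 1) * x i + c :=
      (Int.natCast_dvd_natCast.mpr hpg).trans (Int.gcd_dvd_left _ _)
    have hpa1 : (p : ℤ) ∣ a - 1 := ha' p hp hpm
    have hpc : (p : ℤ) ∣ c := by
      have hceq : c = ((a - 1) * x i + c) - (a - 1) * x i := by ring
      rw [hceq]
      exact dvd_sub hpd (hpa1.mul_right _)
    have hp1 : (p : ℤ) ∣ (Int.gcd c (m : ℤ) : ℤ) := Int.dvd_coe_gcd hpc hpm
    rw [hc] at hp1
    have : p ∣ 1 := by exact_mod_cast hp1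
    exact hp.ne_one (Nat.dvd_one.mp this)
  have aux : ∀ i j : ℕ, i ≤ j → j < m → x i ≡ x j [ZMOD (m : ℤ)] → i = j := by
    intro i j hle hj hmod
    have hd : (m : ℤ) ∣ x j - x i := Int.ModEq.dvd hmod
    have heq : x j - x i = (∑ k ∈ range (j - i), a ^ k) * ((a - 1) * x i + c) := by
      have := hstep i (j - i)
      rwa [Nat.add_sub_cancel' hle] at this
    rw [heq] at hd
    have hdS : (m : ℤ) ∣ ∑ k ∈ range (j - i), a ^ k :=
      ((hcop i).symm).dvd_of_dvd_mul_right hd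
    have hmji : m ∣ j - i := (key (j - i)).mp hdS
    have hlt : j - i < m := lt_of_le_of_lt (Nat.sub_le j i) hj
    have hzero : j - i = 0 := Nat.eq_zero_of_dvd_of_lt hmji hlt
    omega
  constructor
  · have hSm : (m : ℤ) ∣ ∑ k ∈ range m, a ^ k := (key m).mpr dvd_rfl
    have : (m : ℤ) ∣ x 0 - x m := by
      have heq := hstep 0 m
      rw [zero_add] at heq
      have : x 0 - x m = -((∑ k ∈ range m, a ^ k) * ((a - 1) * x 0 + c)) := by
        rw [← heq]; ring
      rw [this]
      exact dvd_neg.mpr (hSm.mul_right _)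
    exact Int.modEq_iff_dvd.mpr this
  · intro i j hi hj hij
    rcases le_total i j with h | h
    · exact aux i j h hj hij
    · exact (aux j i h hi hij.symm).symm
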